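/- (Helstrom lower bound.) Let ψ₀ and ψ₁ be unit vectors in ℂ^d. For every Hermitian operator M on ℂ^d with 0 ≤ M ≤ I (both M and I - M positive semidefinite), the equal-prior error probability ½⟨ψ₀, (I - M)ψ₀⟩ + ½⟨ψ₁, M ψ₁⟩ is at least ½(1 - √(1 - |⟨ψ₀, ψ₁⟩|²)). -/

import Mathlib

open Matrix
open scoped ComplexOrder
open scoped MatrixOrder

lemma cs_dot {d : ℕ} (x y : Fin d → ℂ) :
    ‖star x ⬝ᵥ y‖ ≤ Real.sqrt (star x ⬝ᵥ x).re * Real.sqrt (star y ⬝ᵥ y).re := by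
  have h := norm_inner_le_norm (𝕜 := ℂ)
    ((WithLp.equiv 2 (Fin d → ℂ)).symm x) ((WithLp.equiv 2 (Fin d → ℂ)).symm y)
  have hx : ‖(WithLp.equiv 2 (Fin d → ℂ)).symm x‖ = Real.sqrt (star x ⬝ᵥ x).re := by
    rw [norm_eq_sqrt_re_inner (𝕜 := ℂ), WithLp.equiv_symm_apply, EuclideanSpace.inner_toLp_toLp,
      dotProduct_comm]; rfl
  have hy : ‖(WithLp.equiv 2 (Fin d → ℂ)).symm y‖ = Real.sqrt (star y ⬝ᵥ y).re := by
    rw [norm_eq_sqrt_re_inner (𝕜 := ℂ), WithLp.equiv_symm_apply, EuclideanSpace.inner_toLp_toLp,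
      dotProduct_comm]; rfl
  rw [hx, hy, WithLp.equiv_symm_apply, EuclideanSpace.inner_toLp_toLp, dotProduct_comm] at h
  exact h

lemma dot_sqrt {d : ℕ} {A : Matrix (Fin d) (Fin d) ℂ} (hA : A.PosSemidef)
    (x y : Fin d → ℂ) :
    star x ⬝ᵥ (A *ᵥ y) = star (CFC.sqrt A *ᵥ x) ⬝ᵥ (CFC.sqrt A *ᵥ y) := by
  symm
  rw [star_mulVec, (CFC.sqrt_nonneg A).posSemidef.isHermitian.eq, ← dotProduct_mulVec,
    mulVec_mulVec, CFC.sqrt_mul_sqrt_self A hA.nonneg]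

theorem helstrom_lower_bound
    (d : ℕ) (ψ₀ ψ₁ : Fin d → ℂ)
    (h0 : star ψ₀ ⬝ᵥ ψ₀ = 1) (h1 : star ψ₁ ⬝ᵥ ψ₁ = 1)
    (M : Matrix (Fin d) (Fin d) ℂ)
    (hM : M.PosSemidef) (hM' : (1 - M).PosSemidef) :
    (1 / 2) * (1 - Real.sqrt (1 - ‖star ψ₀ ⬝ᵥ ψ₁‖ ^ 2))
      ≤ (1 / 2) * (star ψ₀ ⬝ᵥ ((1 - M) *ᵥ ψ₀)).re
        + (1 / 2) * (star ψ₁ ⬝ᵥ (M *ᵥ ψ₁)).re := by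
  set a : ℝ := (star ψ₀ ⬝ᵥ (M *ᵥ ψ₀)).re with ha
  set b : ℝ := (star ψ₁ ⬝ᵥ (M *ᵥ ψ₁)).re with hb
  have hsub : ∀ x : Fin d → ℂ, star x ⬝ᵥ ((1 - M) *ᵥ x) = star x ⬝ᵥ x - star x ⬝ᵥ (M *ᵥ x) := by
    intro x; rw [sub_mulVec, dotProduct_sub, one_mulVec]
  have h1a : (star ψ₀ ⬝ᵥ ((1 - M) *ᵥ ψ₀)).re = 1 - a := by
    rw [hsub, Complex.sub_re, h0]; norm_num [ha]
  have h1b : (star ψ₁ ⬝ᵥ ((1 - M) *ᵥ ψ₁)).re = 1 - b := by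
    rw [hsub, Complex.sub_re, h1]; norm_num [hb]
  have ha0 : 0 ≤ a := hM.re_dotProduct_nonneg ψ₀
  have hb0 : 0 ≤ b := hM.re_dotProduct_nonneg ψ₁
  have ha1 : a ≤ 1 := by
    have h : (0:ℝ) ≤ (star ψ₀ ⬝ᵥ ((1 - M) *ᵥ ψ₀)).re := hM'.re_dotProduct_nonneg ψ₀
    rw [h1a] at h; linarith
  have hb1 : b ≤ 1 := by
    have h : (0:ℝ) ≤ (star ψ₁ ⬝ᵥ ((1 - M) *ᵥ ψ₁)).re := hM'.re_dotProduct_nonneg ψ₁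
    rw [h1b] at h; linarith
  have hsplit : star ψ₀ ⬝ᵥ ψ₁ = star ψ₀ ⬝ᵥ (M *ᵥ ψ₁) + star ψ₀ ⬝ᵥ ((1 - M) *ᵥ ψ₁) := by
    rw [sub_mulVec, dotProduct_sub, one_mulVec]; ring
  have hc1 : ‖star ψ₀ ⬝ᵥ (M *ᵥ ψ₁)‖ ≤ Real.sqrt a * Real.sqrt b := by
    have h := cs_dot (CFC.sqrt M *ᵥ ψ₀) (CFC.sqrt M *ᵥ ψ₁)
    rwa [← dot_sqrt hM ψ₀ ψ₁, ← dot_sqrt hM ψ₀ ψ₀, ← dot_sqrt hM ψ₁ ψ₁] at h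
  have hc2 : ‖star ψ₀ ⬝ᵥ ((1 - M) *ᵥ ψ₁)‖
      ≤ Real.sqrt (1 - a) * Real.sqrt (1 - b) := by
    have h := cs_dot (CFC.sqrt (1 - M) *ᵥ ψ₀) (CFC.sqrt (1 - M) *ᵥ ψ₁)
    rwa [← dot_sqrt hM' ψ₀ ψ₁, ← dot_sqrt hM' ψ₀ ψ₀, ← dot_sqrt hM' ψ₁ ψ₁,
      h1a, h1b] at h
  have hc : ‖star ψ₀ ⬝ᵥ ψ₁‖
      ≤ Real.sqrt a * Real.sqrt b + Real.sqrt (1 - a) * Real.sqrt (1 - b) := by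
    calc ‖star ψ₀ ⬝ᵥ ψ₁‖
        ≤ ‖star ψ₀ ⬝ᵥ (M *ᵥ ψ₁)‖ + ‖star ψ₀ ⬝ᵥ ((1 - M) *ᵥ ψ₁)‖ := by
          rw [hsplit]; exact norm_add_le _ _
      _ ≤ _ := add_le_add hc1 hc2
  set c : ℝ := ‖star ψ₀ ⬝ᵥ ψ₁‖ with hcdef
  have hc0 : 0 ≤ c := norm_nonneg _
  have key : a - b ≤ Real.sqrt (1 - c ^ 2) := by
    have hsa : Real.sqrt a ^ 2 = a := Real.sq_sqrt ha0
    have hsb : Real.sqrt b ^ 2 = b := Real.sq_sqrt hb0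
    have hsa' : Real.sqrt (1 - a) ^ 2 = 1 - a := Real.sq_sqrt (by linarith)
    have hsb' : Real.sqrt (1 - b) ^ 2 = 1 - b := Real.sq_sqrt (by linarith)
    have hsq : (a - b) ^ 2 ≤ 1 - c ^ 2 := by
      nlinarith [sq_nonneg (Real.sqrt a * Real.sqrt (1 - a) - Real.sqrt b * Real.sqrt (1 - b)),
        Real.sqrt_nonneg a, Real.sqrt_nonneg b, Real.sqrt_nonneg (1 - a),
        Real.sqrt_nonneg (1 - b), hc, hc0,
        mul_nonneg (Real.sqrt_nonneg a) (Real.sqrt_nonneg b),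
        mul_nonneg (Real.sqrt_nonneg (1 - a)) (Real.sqrt_nonneg (1 - b))]
    calc a - b ≤ |a - b| := le_abs_self _
      _ = Real.sqrt ((a - b) ^ 2) := (Real.sqrt_sq_eq_abs _).symm
      _ ≤ Real.sqrt (1 - c ^ 2) := Real.sqrt_le_sqrt hsq
  rw [h1a]
  linarith [key]
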